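/- Let p_N : ℝ^N → ℂ be 2π-periodic in each coordinate (periodic with primitive cell [0,2π]^N), and let K be a real d×N matrix with rank(K) = d. Define p_d(x) = p_N(Kᵀx). If the dimension of the linear span of range(Kᵀ) ∩ (2π)ℤ^N is equal to d, then p_d is periodic, i.e., there exist d linearly independent vectors a₁,…,a_d ∈ ℝ^d such that p_d(x + n₁a₁ + ⋯ + n_d a_d) = p_d(x) for all x ∈ ℝ^d and all integers n₁,…,n_d. -/

import Mathlib

open Real Matrix

/-- If a `2π`-periodic (in each coordinate) function `pN` on `ℝ^N` is restricted to the
range of `Kᵀ` for a full-rank `d × N` matrix `K`, and the span of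
`range(Kᵀ) ∩ (2π)ℤ^N` has dimension `d`, then `p_d(x) = pN(Kᵀ x)` is periodic with
`d` linearly independent periods. -/
theorem stmt_0 {d N : ℕ} (pN : (Fin N → ℝ) → ℂ)
    (hper : ∀ (y : Fin N → ℝ) (j : Fin N), pN (y + (2 * π) • (Pi.single j 1 : Fin N → ℝ)) = pN y)
    (K : Matrix (Fin d) (Fin N) ℝ) (hrank : K.rank = d)
    (hdim : Module.finrank ℝ (Submodule.span ℝ
      ({v | (∃ x : Fin d → ℝ, (Kᵀ).mulVec x = v) ∧
        (∃ n : Fin N → ℤ, v = fun j => 2 * π * (n j : ℝ))} : Set (Fin N → ℝ))) = d) :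
    ∃ a : Fin d → (Fin d → ℝ), LinearIndependent ℝ a ∧
      ∀ (x : Fin d → ℝ) (n : Fin d → ℤ),
        pN ((Kᵀ).mulVec (x + ∑ j, (n j : ℝ) • a j)) = pN ((Kᵀ).mulVec x) := by
  classical
  set S : Set (Fin N → ℝ) := {v | (∃ x : Fin d → ℝ, (Kᵀ).mulVec x = v) ∧
        (∃ n : Fin N → ℤ, v = fun j => 2 * π * (n j : ℝ))} with hSdef
  -- Step 1: pN is invariant under adding an integer multiple of 2π in one coordinate.
  have key1 : ∀ (y : Fin N → ℝ) (j : Fin N) (k : ℤ),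
      pN (y + (k : ℝ) • ((2 * π) • (Pi.single j 1 : Fin N → ℝ))) = pN y := by
    intro y j k
    induction k using Int.induction_on with
    | zero => simp
    | succ k ih =>
        push_cast at ih ⊢
        have h2 : y + ((k : ℝ) + 1) • ((2 * π) • (Pi.single j 1 : Fin N → ℝ))
            = (y + (k : ℝ) • ((2 * π) • (Pi.single j 1 : Fin N → ℝ)))
              + (2 * π) • (Pi.single j 1 : Fin N → ℝ) := by
          module
        rw [h2, hper, ih]
    | pred k ih =>
        push_cast at ih ⊢
        have h2 : (y + (-(k : ℝ) - 1) • ((2 * π) • (Pi.single j 1 : Fin N → ℝ)))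
              + (2 * π) • (Pi.single j 1 : Fin N → ℝ)
            = y + (-(k : ℝ)) • ((2 * π) • (Pi.single j 1 : Fin N → ℝ)) := by
          module
        have h3 := hper (y + (-(k : ℝ) - 1) • ((2 * π) • (Pi.single j 1 : Fin N → ℝ))) j
        rw [h2] at h3
        rw [← h3]
        exact ih
  -- Step 2: pN is invariant under adding 2π times any integer vector.
  have key : ∀ (y : Fin N → ℝ) (m : Fin N → ℤ),
      pN (y + fun j => 2 * π * (m j : ℝ)) = pN y := by
    intro y m
    have hrepr : ∀ s : Finset (Fin N),
        pN (y + ∑ j ∈ s, (m j : ℝ) • ((2 * π) • (Pi.single j 1 : Fin N → ℝ))) = pN y := by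
      intro s
      induction s using Finset.induction_on with
      | empty => simp
      | @insert j s hj ih =>
          rw [Finset.sum_insert hj]
          rw [show y + ((m j : ℝ) • ((2 * π) • (Pi.single j 1 : Fin N → ℝ))
              + ∑ i ∈ s, (m i : ℝ) • ((2 * π) • (Pi.single i 1 : Fin N → ℝ)))
            = (y + ∑ i ∈ s, (m i : ℝ) • ((2 * π) • (Pi.single i 1 : Fin N → ℝ)))
              + (m j : ℝ) • ((2 * π) • (Pi.single j 1 : Fin N → ℝ)) by module]
          rw [key1, ih]
    have heq : (fun j => 2 * π * (m j : ℝ))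
        = ∑ j : Fin N, (m j : ℝ) • ((2 * π) • (Pi.single j 1 : Fin N → ℝ)) := by
      funext jj
      simp [Finset.sum_apply, Pi.single_apply, Finset.sum_ite_eq', mul_comm]
    rw [heq]
    exact hrepr Finset.univ
  -- Step 3: extract d linearly independent vectors from S.
  obtain ⟨b, hbS, hbspan, hbli⟩ := exists_linearIndependent ℝ S
  have hbfin : b.Finite := hbli.setFinite
  haveI : Fintype b := hbfin.fintype
  have hcard : b.toFinset.card = d := by
    rw [← finrank_span_set_eq_card hbli, hbspan]
    exact hdim
  have hcard' : Fintype.card b = d := by rwa [Set.toFinset_card] at hcard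
  let e : Fin d ≃ b := (Fintype.equivFinOfCardEq hcard').symm
  let v : Fin d → (Fin N → ℝ) := fun i => (e i : Fin N → ℝ)
  have hvli : LinearIndependent ℝ v := hbli.comp e e.injective
  have hvS : ∀ i, v i ∈ S := fun i => hbS (e i).2
  choose a ha using fun i => (hvS i).1
  choose nn hnn using fun i => (hvS i).2
  refine ⟨a, ?_, ?_⟩
  · have hcomp : ((Kᵀ).mulVecLin ∘ a) = v := by
      funext i
      show (Kᵀ).mulVecLin (a i) = v i
      rw [Matrix.mulVecLin_apply]
      exact ha i
    exact LinearIndependent.of_comp (Kᵀ).mulVecLin (hcomp ▸ hvli)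
  · intro x n
    have hmv : (Kᵀ).mulVec (x + ∑ j, (n j : ℝ) • a j)
        = (Kᵀ).mulVec x + fun jj => 2 * π * ((∑ j, n j * nn j jj : ℤ) : ℝ) := by
      have : (Kᵀ).mulVec (x + ∑ j, (n j : ℝ) • a j)
          = (Kᵀ).mulVec x + ∑ j, (n j : ℝ) • (Kᵀ).mulVec (a j) := by
        rw [← Matrix.mulVecLin_apply, map_add, map_sum]
        simp only [_root_.map_smul, Matrix.mulVecLin_apply]
      rw [this]
      congr 1
      funext jj
      rw [Finset.sum_apply]
      push_cast
      rw [Finset.mul_sum]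
      refine Finset.sum_congr rfl fun j _ => ?_
      have : (Kᵀ).mulVec (a j) = v j := ha j
      rw [Pi.smul_apply, this, hnn j, smul_eq_mul]
      ring
    rw [hmv, key]
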